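/- Let C ⊆ E be a convex set of diameter at most D (i.e., ‖x - y‖ ≤ D for all x, y ∈ C) with D > 0, and let T : E → E map C into C and be γ-Lipschitz on C. Let ε > 0, β ∈ (0,1), set λ = (βε/D)/(1 + βε/D), and suppose 0 < γ < 1 + βε/D. Let x₀ ∈ C with T(x₀) ≠ x₀ and suppose ‖T(x₀) - x₀‖ > (1-β)·ε, and let the sequence (x_k) be defined by x_{k+1} = λ·x₀ + (1-λ)·T(x_k). Then for k = ⌈ln(‖T(x₀) - x₀‖/((1-β)·ε)) / (-ln((1-λ)·γ))⌉ we have ‖T(x_k) - x_k‖ ≤ ε. -/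

import Mathlib

/-- Convergence of the fixed-step Halpern iteration for a mildly expansive
operator mapping a convex set of diameter at most `D` to itself: if
`γ < 1 + βε/D` and `λ = (βε/D)/(1 + βε/D)`, then after
`k = ⌈ln(‖T x₀ - x₀‖/((1-β)ε)) / (-ln((1-λ)γ))⌉` iterations the
fixed-point error is at most ε. -/
theorem fixed_step_halpern_mildly_expansive
    {E : Type*} [NormedAddCommGroup E] [NormedSpace ℝ E]
    (C : Set E) (hC : Convex ℝ C)
    (D : ℝ) (hD0 : 0 < D) (hdiam : ∀ x ∈ C, ∀ y ∈ C, ‖x - y‖ ≤ D)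
    (T : E → E) (hTC : ∀ x ∈ C, T x ∈ C)
    (γ : ℝ) (hγ0 : 0 < γ)
    (hT : ∀ x ∈ C, ∀ y ∈ C, ‖T x - T y‖ ≤ γ * ‖x - y‖)
    (ε : ℝ) (hε : 0 < ε) (β : ℝ) (hβ0 : 0 < β) (hβ1 : β < 1)
    (hγ : γ < 1 + β * ε / D)
    (l : ℝ) (hl : l = (β * ε / D) / (1 + β * ε / D))
    (x₀ : E) (hx₀C : x₀ ∈ C) (hx₀ : T x₀ ≠ x₀)
    (hbig : (1 - β) * ε < ‖T x₀ - x₀‖)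
    (x : ℕ → E) (hx0 : x 0 = x₀)
    (hx : ∀ k : ℕ, x (k + 1) = l • x₀ + (1 - l) • T (x k)) :
    ∀ k : ℕ,
      k = ⌈Real.log (‖T x₀ - x₀‖ / ((1 - β) * ε)) /
            (-Real.log ((1 - l) * γ))⌉₊ →
      ‖T (x k) - x k‖ ≤ ε := by
  intro k hk
  have hm0 : 0 < β * ε / D := by positivity
  have h1m : (0:ℝ) < 1 + β * ε / D := by linarith
  have hl0 : 0 < l := by rw [hl]; positivity
  have h1l : 1 - l = 1 / (1 + β * ε / D) := by rw [hl]; field_simp; ring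
  have h1l0 : 0 < 1 - l := by rw [h1l]; positivity
  set q := (1 - l) * γ with hq
  have hq0 : 0 < q := mul_pos h1l0 hγ0
  have hq1 : q < 1 := by
    rw [hq, h1l, div_mul_eq_mul_div, one_mul, div_lt_one h1m]
    exact hγ
  set r0 := ‖T x₀ - x₀‖ with hr0
  have hc : 0 < (1 - β) * ε := by
    have : (0:ℝ) < 1 - β := by linarith
    positivity
  have hr0pos : 0 < r0 := lt_trans hc hbig
  have hmem : ∀ n, x n ∈ C := by
    intro n; induction n with
    | zero => rw [hx0]; exact hx₀C
    | succ n ih =>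
      rw [hx n]
      exact hC hx₀C (hTC _ ih) (le_of_lt hl0) (le_of_lt h1l0) (by ring)
  have hdiff : ∀ n, ‖x (n+1) - x n‖ ≤ q ^ n * ((1 - l) * r0) := by
    intro n; induction n with
    | zero =>
      have h1 : x 1 - x 0 = (1 - l) • (T x₀ - x₀) := by
        rw [hx 0, hx0]; module
      rw [h1, norm_smul, pow_zero, one_mul, Real.norm_eq_abs, abs_of_pos h1l0]
    | succ n ih =>
      have heq : x (n+2) - x (n+1) = (1 - l) • (T (x (n+1)) - T (x n)) := by
        rw [hx (n+1), hx n]; module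
      calc ‖x (n+2) - x (n+1)‖ = (1 - l) * ‖T (x (n+1)) - T (x n)‖ := by
            rw [heq, norm_smul, Real.norm_eq_abs, abs_of_pos h1l0]
        _ ≤ (1 - l) * (γ * ‖x (n+1) - x n‖) :=
            mul_le_mul_of_nonneg_left (hT _ (hmem _) _ (hmem _)) (le_of_lt h1l0)
        _ ≤ (1 - l) * (γ * (q ^ n * ((1 - l) * r0))) := by
            have := mul_le_mul_of_nonneg_left ih (le_of_lt hγ0)
            exact mul_le_mul_of_nonneg_left this (le_of_lt h1l0)
        _ = q ^ (n+1) * ((1 - l) * r0) := by rw [hq]; ring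
  have hres : (1 - l) * ‖T (x k) - x k‖ ≤ q ^ k * ((1 - l) * r0) + l * D := by
    have heq : (1 - l) • (T (x k) - x k) = (x (k+1) - x k) - l • (x₀ - x k) := by
      rw [hx k]; module
    calc (1 - l) * ‖T (x k) - x k‖ = ‖(1 - l) • (T (x k) - x k)‖ := by
          rw [norm_smul, Real.norm_eq_abs, abs_of_pos h1l0]
      _ = ‖(x (k+1) - x k) - l • (x₀ - x k)‖ := by rw [heq]
      _ ≤ ‖x (k+1) - x k‖ + ‖l • (x₀ - x k)‖ := norm_sub_le _ _
      _ ≤ q ^ k * ((1 - l) * r0) + l * D := by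
          refine add_le_add (hdiff k) ?_
          rw [norm_smul, Real.norm_eq_abs, abs_of_pos hl0]
          exact mul_le_mul_of_nonneg_left (hdiam _ hx₀C _ (hmem k)) (le_of_lt hl0)
  have hlD : l * D = (1 - l) * (β * ε) := by
    rw [hl]
    field_simp
    ring
  have hqk : q ^ k * r0 ≤ (1 - β) * ε := by
    have hlogq : Real.log q < 0 := Real.log_neg hq0 hq1
    have hkge : Real.log (r0 / ((1 - β) * ε)) / (-Real.log q) ≤ (k:ℝ) := by
      rw [hk]; exact Nat.le_ceil _
    have h2 : Real.log (r0 / ((1 - β) * ε)) ≤ (k:ℝ) * (-Real.log q) := by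
      rwa [div_le_iff₀ (by linarith)] at hkge
    have h3 : Real.log (q ^ k * r0) ≤ Real.log ((1 - β) * ε) := by
      rw [Real.log_mul (by positivity) (ne_of_gt hr0pos), Real.log_pow]
      rw [Real.log_div (ne_of_gt hr0pos) (ne_of_gt hc)] at h2
      push_cast
      linarith
    have h4 := Real.exp_le_exp.mpr h3
    rwa [Real.exp_log (by positivity), Real.exp_log hc] at h4
  have hfin : (1 - l) * ‖T (x k) - x k‖ ≤ (1 - l) * ε := by
    rw [hlD] at hres
    nlinarith [hres, hqk]
  exact le_of_mul_le_mul_left hfin h1l0
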